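/- The scalar smooth Huber-type cost f(x) = (y - x)²/(|y - x| + β) + γx² with β > 0, γ > 0 and fixed y ∈ ℝ is C¹ on ℝ and strictly convex. -/

import Mathlib

open Set Filter Topology

private lemma gmono (β : ℝ) (hβ : 0 < β) :
    Monotone (fun t : ℝ => t * (|t| + 2 * β) / (|t| + β) ^ 2) := by
  intro s t hst
  simp only
  rw [div_le_div_iff₀ (by positivity) (by positivity)]
  rcases abs_cases s with ⟨hs1, hs2⟩ | ⟨hs1, hs2⟩ <;>
      rcases abs_cases t with ⟨ht1, ht2⟩ | ⟨ht1, ht2⟩ <;> rw [hs1, ht1]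
  · nlinarith [sq_nonneg (s - t), sq_nonneg (s + t), mul_pos hβ hβ,
      mul_nonneg (mul_nonneg hβ.le hβ.le) (sub_nonneg.mpr hst)]
  · linarith
  · have hL : s * (-s + 2 * β) * (t + β) ^ 2 ≤ 0 := by
      have h1 : (0:ℝ) < -s + 2 * β := by linarith
      have h2 : (0:ℝ) ≤ (t + β) ^ 2 := sq_nonneg _
      have h3 := mul_nonpos_of_nonpos_of_nonneg hs2.le (mul_nonneg h1.le h2)
      nlinarith [h3]
    have hR : 0 ≤ t * (t + 2 * β) * (-s + β) ^ 2 := by positivity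
    linarith
  · nlinarith [sq_nonneg (s - t), sq_nonneg (s + t), mul_pos hβ hβ,
      mul_nonneg (mul_nonneg hβ.le hβ.le) (sub_nonneg.mpr hst)]

private lemma hasDerivAt_G (β y : ℝ) (hβ : 0 < β) (x : ℝ) :
    HasDerivAt (fun x' : ℝ => (y - x') ^ 2 / (|y - x'| + β))
      (-((y - x) * (|y - x| + 2 * β) / (|y - x| + β) ^ 2)) x := by
  rcases lt_trichotomy x y with hxy | hxy | hxy
  · -- y - x > 0
    have h1 : HasDerivAt (fun x' : ℝ => (y - x') ^ 2 / ((y - x') + β))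
        (-((y - x) * ((y - x) + 2 * β) / ((y - x) + β) ^ 2)) x := by
      have hd : (y - x) + β ≠ 0 := by nlinarith
      have hnum : HasDerivAt (fun x' : ℝ => (y - x') ^ 2) (-(2 * (y - x))) x := by
        have := ((hasDerivAt_id x).const_sub y).fun_pow 2
        simpa using this
      have hden : HasDerivAt (fun x' : ℝ => (y - x') + β) (-1) x := by
        simpa using ((hasDerivAt_id x).const_sub y).add_const β
      have := hnum.fun_div hden hd
      refine this.congr_deriv ?_
      field_simp
      ring
    have heq : (fun x' : ℝ => (y - x') ^ 2 / (|y - x'| + β)) =ᶠ[𝓝 x]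
        (fun x' : ℝ => (y - x') ^ 2 / ((y - x') + β)) := by
      filter_upwards [Iio_mem_nhds hxy] with x' hx'
      rw [abs_of_pos (by simp only [mem_Iio] at hx'; linarith : (0:ℝ) < y - x')]
    rw [abs_of_pos (by linarith : (0:ℝ) < y - x)]
    exact h1.congr_of_eventuallyEq heq
  · -- x = y
    subst hxy
    have h0 : -((x - x) * (|x - x| + 2 * β) / (|x - x| + β) ^ 2) = 0 := by simp
    rw [h0, hasDerivAt_iff_tendsto_slope]
    have hb : ∀ᶠ x' in 𝓝[≠] x,
        ‖slope (fun x' : ℝ => (x - x') ^ 2 / (|x - x'| + β)) x x'‖ ≤ |x' - x| / β := by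
      filter_upwards [self_mem_nhdsWithin] with x' hx'
      have hd : x' - x ≠ 0 := sub_ne_zero.mpr hx'
      have hdpos : 0 < |x' - x| := abs_pos.mpr hd
      rw [slope_def_field]
      have hy0 : (x - x) ^ 2 / (|x - x| + β) = 0 := by simp
      rw [hy0, sub_zero]
      rw [Real.norm_eq_abs, abs_div, div_le_div_iff₀ hdpos hβ]
      rw [abs_of_nonneg (by positivity : (0:ℝ) ≤ (x - x') ^ 2 / (|x - x'| + β))]
      rw [div_mul_eq_mul_div, div_le_iff₀ (by positivity : (0:ℝ) < |x - x'| + β)]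
      have h1 : |x - x'| = |x' - x| := abs_sub_comm _ _
      have h2 : (x - x') ^ 2 = |x' - x| ^ 2 := by
        rw [← sq_abs, h1]
      rw [h1, h2]
      nlinarith [abs_nonneg (x' - x)]
    apply squeeze_zero_norm' hb
    have : Tendsto (fun x' : ℝ => |x' - x| / β) (𝓝 x) (𝓝 (|x - x| / β)) := by
      apply Tendsto.div_const
      exact ((continuous_id.sub continuous_const).abs).continuousAt
    simpa using this.mono_left nhdsWithin_le_nhds
  · -- y - x < 0
    have h1 : HasDerivAt (fun x' : ℝ => (y - x') ^ 2 / (-(y - x') + β))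
        (-((y - x) * (-(y - x) + 2 * β) / (-(y - x) + β) ^ 2)) x := by
      have hd : -(y - x) + β ≠ 0 := by nlinarith
      have hnum : HasDerivAt (fun x' : ℝ => (y - x') ^ 2) (-(2 * (y - x))) x := by
        have := ((hasDerivAt_id x).const_sub y).fun_pow 2
        simpa using this
      have hden : HasDerivAt (fun x' : ℝ => -(y - x') + β) 1 x := by
        simpa using (((hasDerivAt_id x).const_sub y).neg).add_const β
      have := hnum.fun_div hden hd
      refine this.congr_deriv ?_
      field_simp
      ring
    have heq : (fun x' : ℝ => (y - x') ^ 2 / (|y - x'| + β)) =ᶠ[𝓝 x]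
        (fun x' : ℝ => (y - x') ^ 2 / (-(y - x') + β)) := by
      filter_upwards [Ioi_mem_nhds hxy] with x' hx'
      rw [abs_of_neg (by simp only [mem_Ioi] at hx'; linarith : (y - x' : ℝ) < 0)]
    rw [abs_of_neg (by linarith : (y - x : ℝ) < 0)]
    exact h1.congr_of_eventuallyEq heq

theorem stmt15 (β γ y : ℝ) (hβ : 0 < β) (hγ : 0 < γ) :
    ContDiff ℝ 1 (fun x : ℝ => (y - x) ^ 2 / (|y - x| + β) + γ * x ^ 2) ∧
    StrictConvexOn ℝ Set.univ (fun x : ℝ => (y - x) ^ 2 / (|y - x| + β) + γ * x ^ 2) := by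
  set f : ℝ → ℝ := fun x => (y - x) ^ 2 / (|y - x| + β) + γ * x ^ 2 with hf
  set D : ℝ → ℝ :=
    fun x => -((y - x) * (|y - x| + 2 * β) / (|y - x| + β) ^ 2) + γ * (2 * x) with hD
  have hderiv : ∀ x, HasDerivAt f (D x) x := by
    intro x
    have h1 := hasDerivAt_G β y hβ x
    have h2 : HasDerivAt (fun x' : ℝ => γ * x' ^ 2) (γ * (2 * x)) x := by
      simpa using (hasDerivAt_pow 2 x).const_mul γ
    exact h1.add h2
  have hDcont : Continuous D := by
    have hne : ∀ x : ℝ, (|y - x| + β) ^ 2 ≠ 0 := by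
      intro x; positivity
    have c1 : Continuous fun x : ℝ => (y - x) * (|y - x| + 2 * β) := by continuity
    have c2 : Continuous fun x : ℝ => (|y - x| + β) ^ 2 := by continuity
    exact ((c1.div c2 hne).neg).add (by continuity)
  have hderiv_eq : deriv f = D := by
    funext x
    exact (hderiv x).deriv
  have hdiff : Differentiable ℝ f := fun x => (hderiv x).differentiableAt
  have hcont : Continuous f := hdiff.continuous
  constructor
  · rw [contDiff_one_iff_deriv]
    exact ⟨hdiff, hderiv_eq ▸ hDcont⟩
  · have hmono : StrictMono D := by
      intro a b hab
      have h1 := gmono β hβ (show y - b ≤ y - a by linarith)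
      simp only at h1
      have h2 : γ * (2 * a) < γ * (2 * b) := by nlinarith
      simp only [hD]
      linarith
    have hmono' : StrictMono (deriv f) := by rw [hderiv_eq]; exact hmono
    exact StrictMono.strictConvexOn_univ_of_deriv hcont hmono'
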